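/- Let d ≥ 0 and let G be a connected locally finite (2d+1)-regular simple graph on vertex set V. Then G has a perfect matching if and only if G admits a Schreier structure. (Equivalently: a connected (2d+1)-regular graph is isomorphic to a Schreier graph if and only if it is matchable.) -/

import Mathlib

open Function Set

/-- Schröder–Bernstein along a relation. -/
theorem csb_rel {α β : Type*} (r : α → β → Prop) {f : α → β} {g : β → α}
    (hf : Injective f) (hfr : ∀ a, r a (f a)) (hg : Injective g) (hgr : ∀ b, r (g b) b) :
    ∃ h : α → β, Bijective h ∧ ∀ a, r a (h a) := by
  classical
  cases' isEmpty_or_nonempty β with hβ hβ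
  · have : IsEmpty α := Function.isEmpty f
    refine ⟨f, ⟨hf, fun b => (hβ.false b).elim⟩, hfr⟩
  set F : Set α →o Set α :=
    { toFun := fun s => (g '' (f '' s)ᶜ)ᶜ
      monotone' := fun s t hst =>
        compl_subset_compl.mpr <| image_mono <| compl_subset_compl.mpr <| image_mono hst }
  set s : Set α := F.lfp
  have hs : (g '' (f '' s)ᶜ)ᶜ = s := F.map_lfp
  have hns : g '' (f '' s)ᶜ = sᶜ := compl_injective (by simp [hs])
  set g' := invFun g
  have g'g : LeftInverse g' g := leftInverse_invFun hg
  have hg'ns : g' '' sᶜ = (f '' s)ᶜ := by rw [← hns, g'g.image_image]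
  set h : α → β := s.piecewise f g'
  have hsurj : Surjective h := by rw [← range_eq_univ, range_piecewise, hg'ns, union_compl_self]
  have hinj : Injective h := by
    refine (injective_piecewise_iff _).2 ⟨hf.injOn, ?_, ?_⟩
    · intro x hx y hy hxy
      obtain ⟨x', _, rfl⟩ : x ∈ g '' (f '' s)ᶜ := by rwa [hns]
      obtain ⟨y', _, rfl⟩ : y ∈ g '' (f '' s)ᶜ := by rwa [hns]
      rw [g'g _, g'g _] at hxy
      rw [hxy]
    · intro x hx y hy hxy
      obtain ⟨y', hy', rfl⟩ : y ∈ g '' (f '' s)ᶜ := by rwa [hns]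
      rw [g'g _] at hxy
      exact hy' ⟨x, hx, hxy⟩
  refine ⟨h, ⟨hinj, hsurj⟩, fun a => ?_⟩
  by_cases ha : a ∈ s
  · have : h a = f a := Set.piecewise_eq_of_mem _ _ _ ha
    rw [this]; exact hfr a
  · obtain ⟨b, _, rfl⟩ : a ∈ g '' (f '' s)ᶜ := by rwa [hns]
    have : h (g b) = g' (g b) := Set.piecewise_eq_of_notMem _ _ _ ha
    rw [this, g'g b]
    exact hgr b

/-- Hall condition for a (sub-)regular bipartite graph. -/
theorem hall_cond_of_regular {α β : Type*} [DecidableEq β] {k : ℕ} (hk : 0 < k)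
    (t : α → Finset β) (t' : β → Finset α) (hcompat : ∀ a b, b ∈ t a ↔ a ∈ t' b)
    (ht : ∀ a, (t a).card = k) (ht' : ∀ b, (t' b).card ≤ k) (s : Finset α) :
    s.card ≤ (s.biUnion t).card := by
  classical
  have key : k * s.card ≤ k * (s.biUnion t).card := by
    calc k * s.card = ∑ a ∈ s, (t a).card := by
          rw [Finset.sum_congr rfl fun a _ => ht a, Finset.sum_const, smul_eq_mul, mul_comm]
      _ = ∑ a ∈ s, ∑ b ∈ s.biUnion t, (if b ∈ t a then 1 else 0) := by
          refine Finset.sum_congr rfl fun a ha => ?_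
          rw [Finset.sum_ite_mem, (Finset.inter_eq_right).2 (Finset.subset_biUnion_of_mem t ha),
            Finset.sum_const, smul_eq_mul, mul_one]
      _ = ∑ b ∈ s.biUnion t, (s.filter (fun a => b ∈ t a)).card := by
          rw [Finset.sum_comm]
          refine Finset.sum_congr rfl fun b _ => ?_
          rw [Finset.card_filter]
      _ ≤ ∑ b ∈ s.biUnion t, k := by
          refine Finset.sum_le_sum fun b _ => ?_
          refine le_trans (Finset.card_le_card ?_) (ht' b)
          intro a ha
          simp only [Finset.mem_filter] at ha
          exact (hcompat a b).1 ha.2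
      _ = k * (s.biUnion t).card := by rw [Finset.sum_const, smul_eq_mul, mul_comm]
  exact Nat.le_of_mul_le_mul_left key hk

/-- A `k`-regular bipartite graph has a perfect matching. -/
theorem regular_bipartite_bij {α β : Type*} {k : ℕ} (hk : 0 < k)
    (t : α → Finset β) (t' : β → Finset α) (hcompat : ∀ a b, b ∈ t a ↔ a ∈ t' b)
    (ht : ∀ a, (t a).card = k) (ht' : ∀ b, (t' b).card = k) :
    ∃ f : α → β, Bijective f ∧ ∀ a, f a ∈ t a := by
  classical
  obtain ⟨f, hfinj, hft⟩ := (Finset.all_card_le_biUnion_card_iff_exists_injective t).1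
    (hall_cond_of_regular hk t t' hcompat ht (fun b => (ht' b).le))
  obtain ⟨g, hginj, hgt⟩ := (Finset.all_card_le_biUnion_card_iff_exists_injective t').1
    (hall_cond_of_regular hk t' t (fun b a => (hcompat a b).symm) ht' (fun a => (ht a).le))
  exact csb_rel (fun a b => b ∈ t a) hfinj hft hginj
    (fun b => (hcompat (g b) b).2 (hgt b))

/-- Splitting a `k`-in-`k`-out digraph into `k` permutations. -/
theorem split_digraph {V : Type*} (k : ℕ) (Out In : V → Finset V)
    (hcompat : ∀ x y, y ∈ Out x ↔ x ∈ In y)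
    (hOut : ∀ x, (Out x).card = k) (hIn : ∀ x, (In x).card = k) :
    ∃ σ : Fin k → (V → V), (∀ j, Bijective (σ j)) ∧ (∀ j x, σ j x ∈ Out x) ∧
      (∀ x, Injective fun j => σ j x) := by
  classical
  induction k generalizing Out In with
  | zero =>
    refine ⟨finZeroElim, fun j => j.elim0, fun j => j.elim0, fun x j => j.elim0⟩
  | succ k ih =>
    obtain ⟨f, hfbij, hft⟩ := regular_bipartite_bij (Nat.succ_pos k) Out In hcompat hOut hIn
    set e := Equiv.ofBijective f hfbij with he
    have hsymm : ∀ x, e.symm x ∈ In x := fun x => by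
      have h3 : f (e.symm x) = x := e.apply_symm_apply x
      have h2 := (hcompat (e.symm x) _).1 (hft (e.symm x))
      rwa [h3] at h2
    set Out' : V → Finset V := fun x => (Out x).erase (f x) with hO'
    set In' : V → Finset V := fun x => (In x).erase (e.symm x) with hI'
    have hcompat' : ∀ x y, y ∈ Out' x ↔ x ∈ In' y := by
      intro x y
      simp only [hO', hI', Finset.mem_erase]
      constructor
      · rintro ⟨hne, hmem⟩
        refine ⟨fun hx => hne ?_, (hcompat x y).1 hmem⟩
        · rw [hx]; exact (e.apply_symm_apply y).symm
      · rintro ⟨hne, hmem⟩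
        refine ⟨fun hy => hne ?_, (hcompat x y).2 hmem⟩
        · exact e.eq_symm_apply.2 hy.symm
    have hOut' : ∀ x, (Out' x).card = k := fun x => by
      rw [hO', Finset.card_erase_of_mem (hft x), hOut x]; rfl
    have hIn' : ∀ x, (In' x).card = k := fun x => by
      rw [hI', Finset.card_erase_of_mem (hsymm x), hIn x]; rfl
    obtain ⟨σ', hbij', hmem', hinj'⟩ := ih Out' In' hcompat' hOut' hIn'
    refine ⟨Fin.cases f σ', ?_, ?_, ?_⟩
    · exact Fin.cases hfbij hbij'
    · refine fun j x => Fin.cases (hft x) (fun j => (Finset.erase_subset _ _) (hmem' j x)) j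
    · intro x j j' hjj'
      induction j using Fin.cases with
      | zero =>
        induction j' using Fin.cases with
        | zero => rfl
        | succ j' =>
          exact absurd hjj'.symm (Finset.ne_of_mem_erase (hmem' j' x))
      | succ j =>
        induction j' using Fin.cases with
        | zero => exact absurd hjj' (Finset.ne_of_mem_erase (hmem' j x))
        | succ j' => exact congrArg Fin.succ (hinj' x (by simpa using hjj'))

/-- An involution on an odd finite set has a fixed point. -/
theorem exists_fixed_of_odd {α : Type*} [DecidableEq α] (S : Finset α) (f : α → α)
    (hmem : ∀ s ∈ S, f s ∈ S) (hinv : ∀ s ∈ S, f (f s) = s) (hodd : Odd S.card) :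
    ∃ s ∈ S, f s = s := by
  classical
  suffices H : ∀ n (S : Finset α), S.card = n → (∀ s ∈ S, f s ∈ S) → (∀ s ∈ S, f (f s) = s) →
      Odd S.card → ∃ s ∈ S, f s = s from H S.card S rfl hmem hinv hodd
  clear hmem hinv hodd S
  intro n
  induction n using Nat.strong_induction_on with
  | _ n ih =>
    intro S hn hmem hinv hodd
    by_contra hno
    push_neg at hno
    obtain ⟨s, hs⟩ := Finset.card_pos.1 hodd.pos
    have hfs : f s ∈ S := hmem s hs
    have hne : f s ≠ s := hno s hs
    set S' := (S.erase s).erase (f s) with hS'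
    have hcard : S'.card = S.card - 2 := by
      rw [hS', Finset.card_erase_of_mem (Finset.mem_erase.2 ⟨hne, hfs⟩),
        Finset.card_erase_of_mem hs]
      omega
    have hcard2 : 2 ≤ S.card := Finset.one_lt_card.2 ⟨f s, hfs, s, hs, hne⟩
    have hsub : S' ⊆ S := (Finset.erase_subset _ _).trans (Finset.erase_subset _ _)
    have hmem' : ∀ a ∈ S', f a ∈ S' := by
      intro a ha
      have haS : a ∈ S := hsub ha
      simp only [hS', Finset.mem_erase] at ha ⊢
      refine ⟨fun h => ha.2.1 ?_, fun h => ha.1 ?_, hmem a haS⟩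
      · rw [← hinv a haS, h, hinv s hs]
      · rw [← hinv a haS, h]
    have hodd' : Odd S'.card := by
      obtain ⟨m, hm⟩ := hodd
      rw [hcard]
      exact ⟨m - 1, by omega⟩
    obtain ⟨a, ha, hfa⟩ := ih S'.card (by subst hn; rw [hcard]; omega) S' rfl hmem'
      (fun a ha => hinv a (hsub ha)) hodd'
    exact hno a (hsub ha) hfa

/-- The unordered pair of endpoints of a `Sym2` as a `Finset`. -/
noncomputable def symEnds {V : Type*} (e : Sym2 V) : Finset V :=
  haveI := Classical.decEq V
  Sym2.lift ⟨fun a b => {a, b}, fun a b => Finset.pair_comm a b⟩ e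

theorem mem_symEnds {V : Type*} (e : Sym2 V) (x : V) : x ∈ symEnds e ↔ x ∈ e := by
  classical
  induction e with
  | _ a b => simp [symEnds, Sym2.mem_iff]

theorem card_symEnds {V : Type*} (e : Sym2 V) (hd : ¬ e.IsDiag) : (symEnds e).card = 2 := by
  classical
  induction e with
  | _ a b =>
    have hab : a ≠ b := by simpa using hd
    simp [symEnds, Finset.card_pair hab]

/-- A `2d`-regular graph (given by a symmetric irreflexive relation `A` with neighbor
finsets `NB`) splits into `d` permutations. -/
theorem orient_and_split {V : Type*} (d : ℕ) (A : V → V → Prop)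
    (hsymm : ∀ x y, A x y → A y x) (hirr : ∀ x, ¬ A x x) (NB : V → Finset V)
    (hNB : ∀ x y, y ∈ NB x ↔ A x y) (hcard : ∀ x, (NB x).card = 2 * d) :
    ∃ σ : Fin d → Equiv.Perm V,
      (∀ i x, A x (σ i x)) ∧
      (∀ i j x, (σ i) x ≠ (σ j)⁻¹ x) ∧
      (∀ x, Function.Injective fun i => (σ i) x) ∧
      (∀ x y, A x y → (∃ i, σ i x = y) ∨ (∃ i, σ i y = x)) := by
  classical
  rcases Nat.eq_zero_or_pos d with hd | hd
  · subst hd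
    refine ⟨Fin.elim0, fun i => i.elim0, fun i => i.elim0, fun x i => i.elim0, fun x y hA => ?_⟩
    have hmem := (hNB x y).2 hA
    have h0 : NB x = ∅ := Finset.card_eq_zero.1 (by simpa using hcard x)
    rw [h0] at hmem
    simp at hmem
  -- the edge type
  set E := {e : Sym2 V // ∃ p : V × V, e = s(p.1, p.2) ∧ A p.1 p.2} with hE
  have hEA : ∀ (e : E) (x y : V), e.1 = s(x, y) → A x y := by
    rintro ⟨e, ⟨⟨a, b⟩, rfl, hab⟩⟩ x y h
    rcases (Sym2.mk_eq_mk_iff (p := (x, y)) (q := (a, b))).1 h.symm with h' | h' <;>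
      · simp only [Prod.ext_iff, Prod.swap] at h'
        obtain ⟨rfl, rfl⟩ := h'
        first | exact hab | exact hsymm _ _ hab
  have hEne : ∀ (e : E), ¬ e.1.IsDiag := by
    rintro ⟨e, ⟨⟨a, b⟩, rfl, hab⟩⟩ hdiag
    have : a = b := by simpa using hdiag
    exact hirr b (this ▸ hab)
  -- bipartite incidence structure between edges and (vertex, color) pairs
  set t : E → Finset (V × Fin d) := fun e => symEnds e.1 ×ˢ Finset.univ with ht
  set t' : V × Fin d → Finset E := fun p => (NB p.1).attach.image
    (fun y => (⟨s(p.1, y.1), ⟨(p.1, y.1), rfl, (hNB p.1 y.1).1 y.2⟩⟩ : E)) with ht'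
  have htc : ∀ e : E, (t e).card = 2 * d := by
    intro e
    rw [ht]
    simp [Finset.card_product, card_symEnds e.1 (hEne e)]
  have ht'c : ∀ p : V × Fin d, (t' p).card = 2 * d := by
    intro p
    rw [ht']
    rw [Finset.card_image_of_injOn, Finset.card_attach, hcard]
    intro y _ z _ h
    have := Subtype.ext_iff.1 h
    exact Subtype.ext (Sym2.congr_right.1 this)
  have hcompat : ∀ (e : E) (p : V × Fin d), p ∈ t e ↔ e ∈ t' p := by
    intro e p
    rw [ht, ht']
    simp only [Finset.mem_product, Finset.mem_univ, and_true, mem_symEnds]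
    constructor
    · intro hx
      have hspec := Sym2.other_spec' hx
      have hA : A p.1 (Sym2.Mem.other' hx) := hEA e _ _ hspec.symm
      rw [Finset.mem_image]
      exact ⟨⟨Sym2.Mem.other' hx, (hNB _ _).2 hA⟩, Finset.mem_attach _ _,
        Subtype.ext hspec⟩
    · intro he
      rw [Finset.mem_image] at he
      obtain ⟨y, _, rfl⟩ := he
      exact Sym2.mem_mk_left _ _
  obtain ⟨F, hFbij, hFt⟩ := regular_bipartite_bij (by omega : 0 < 2 * d) t t' hcompat htc ht'c
  have hFmem : ∀ e : E, (F e).1 ∈ e.1 := by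
    intro e
    have := hFt e
    rw [ht, Finset.mem_product] at this
    exact (mem_symEnds _ _).1 this.1
  set Eq := Equiv.ofBijective F hFbij with hEq
  have hxe : ∀ (x : V) (i : Fin d), x ∈ (Eq.symm (x, i)).1 := by
    intro x i
    have h1 : F (Eq.symm (x, i)) = (x, i) := Eq.apply_symm_apply (x, i)
    have h2 := hFmem (Eq.symm (x, i))
    rw [h1] at h2
    exact h2
  set o : V → Fin d → V := fun x i => Sym2.Mem.other' (hxe x i) with ho
  have ho_spec : ∀ x i, s(x, o x i) = (Eq.symm (x, i)).1 := fun x i => Sym2.other_spec' _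
  have hAo : ∀ x i, A x (o x i) := fun x i => hEA _ _ _ (ho_spec x i).symm
  have hAo' : ∀ x i, o x i ∈ NB x := fun x i => (hNB _ _).2 (hAo x i)
  -- tail characterization
  have key : ∀ (e : E) (x : V), x ∈ e.1 → ((F e).1 = x ↔ ∃ i, (Eq.symm (x, i) : E) = e) := by
    intro e x hx
    constructor
    · intro h
      refine ⟨(F e).2, ?_⟩
      rw [← h]
      have h2 : ((F e).1, (F e).2) = F e := rfl
      rw [h2]
      exact Eq.symm_apply_apply e
    · rintro ⟨i, rfl⟩
      have h2 : F (Eq.symm (x, i)) = (x, i) := Eq.apply_symm_apply (x, i)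
      rw [h2]
  have hout_iff : ∀ (x y : V) (hA : A x y),
      ((F ⟨s(x, y), ⟨(x, y), rfl, hA⟩⟩).1 = x ↔ ∃ i, o x i = y) := by
    intro x y hA
    set exy : E := ⟨s(x, y), ⟨(x, y), rfl, hA⟩⟩ with hexy
    have hx : x ∈ exy.1 := Sym2.mem_mk_left x y
    rw [key exy x hx]
    constructor
    · rintro ⟨i, hi⟩
      refine ⟨i, ?_⟩
      have h1 : s(x, o x i) = exy.1 := by rw [ho_spec, hi]
      have h2 : s(x, o x i) = s(x, y) := h1
      exact Sym2.congr_right.1 h2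
    · rintro ⟨i, hi⟩
      refine ⟨i, ?_⟩
      apply Subtype.ext
      rw [← ho_spec x i, hi]
  have ho_inj : ∀ x, Injective (o x) := by
    intro x i j hij
    have h1 : (Eq.symm (x, i) : E) = Eq.symm (x, j) := by
      apply Subtype.ext
      rw [← ho_spec x i, ← ho_spec x j, hij]
    have := Eq.symm.injective h1
    simpa using this
  have hne_xy : ∀ x y, A x y → x ≠ y := by
    intro x y hA h; exact hirr x (h ▸ hA)
  have hdisj : ∀ x y, A x y → (∃ i, o x i = y) → (∃ j, o y j = x) → False := by
    intro x y hA h1 h2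
    have hA' := hsymm x y hA
    set exy : E := ⟨s(x, y), ⟨(x, y), rfl, hA⟩⟩ with hexy
    set eyx : E := ⟨s(y, x), ⟨(y, x), rfl, hA'⟩⟩ with heyx
    have heq : eyx = exy := Subtype.ext (Sym2.eq_swap)
    have hx : (F exy).1 = x := (hout_iff x y hA).2 h1
    have hy : (F eyx).1 = y := (hout_iff y x hA').2 h2
    rw [heq, hx] at hy
    exact hne_xy x y hA hy
  have hcover : ∀ x y, A x y → (∃ i, o x i = y) ∨ (∃ i, o y i = x) := by
    intro x y hA
    have hA' := hsymm x y hA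
    set exy : E := ⟨s(x, y), ⟨(x, y), rfl, hA⟩⟩ with hexy
    set eyx : E := ⟨s(y, x), ⟨(y, x), rfl, hA'⟩⟩ with heyx
    have heq : eyx = exy := Subtype.ext (Sym2.eq_swap)
    have hmem := hFmem exy
    rw [show (exy.1 : Sym2 V) = s(x, y) from rfl, Sym2.mem_iff] at hmem
    rcases hmem with h | h
    · exact Or.inl ((hout_iff x y hA).1 h)
    · refine Or.inr ((hout_iff y x hA').1 ?_)
      show (F eyx).1 = y
      rw [heq, h]
  -- out- and in-neighborhoods
  set Out : V → Finset V := fun x => Finset.image (o x) Finset.univ with hOutdef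
  set In : V → Finset V := fun x => (NB x).filter (fun z => ∃ i, o z i = x) with hIndef
  have hmem_Out : ∀ x y, y ∈ Out x ↔ ∃ i, o x i = y := by
    intro x y; rw [hOutdef]; simp
  have hmem_In : ∀ x y, y ∈ In x ↔ A x y ∧ ∃ i, o y i = x := by
    intro x y; rw [hIndef]; simp [hNB]
  have hcompat2 : ∀ x y, y ∈ Out x ↔ x ∈ In y := by
    intro x y
    rw [hmem_Out, hmem_In]
    constructor
    · rintro ⟨i, rfl⟩
      exact ⟨hsymm _ _ (hAo x i), ⟨i, rfl⟩⟩
    · rintro ⟨_, i, rfl⟩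
      exact ⟨i, rfl⟩
  have hOutcard : ∀ x, (Out x).card = d := by
    intro x
    rw [hOutdef]
    rw [Finset.card_image_of_injective _ (ho_inj x), Finset.card_univ, Fintype.card_fin]
  have hunion : ∀ x, Out x ∪ In x = NB x := by
    intro x
    apply Finset.Subset.antisymm
    · intro y hy
      rw [Finset.mem_union, hmem_Out, hmem_In] at hy
      rcases hy with ⟨i, rfl⟩ | ⟨hA, _⟩
      · exact hAo' x i
      · exact (hNB x y).2 hA
    · intro y hy
      rw [Finset.mem_union, hmem_Out, hmem_In]
      have hA := (hNB x y).1 hy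
      rcases hcover x y hA with h | h
      · exact Or.inl h
      · exact Or.inr ⟨hA, h⟩
  have hdisj2 : ∀ x, Disjoint (Out x) (In x) := by
    intro x
    rw [Finset.disjoint_left]
    intro y hy hy'
    rw [hmem_Out] at hy
    rw [hmem_In] at hy'
    exact hdisj x y hy'.1 hy hy'.2
  have hIncard : ∀ x, (In x).card = d := by
    intro x
    have h1 := Finset.card_union_of_disjoint (hdisj2 x)
    rw [hunion x, hcard x, hOutcard x] at h1
    omega
  obtain ⟨σ', hbij', hmem', hinj'⟩ := split_digraph d Out In hcompat2 hOutcard hIncard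
  have hOut_eq : ∀ x, Finset.image (fun j => σ' j x) Finset.univ = Out x := by
    intro x
    apply Finset.eq_of_subset_of_card_le
    · intro y hy
      rw [Finset.mem_image] at hy
      obtain ⟨j, _, rfl⟩ := hy
      exact hmem' j x
    · rw [hOutcard, Finset.card_image_of_injective _ (hinj' x), Finset.card_univ,
        Fintype.card_fin]
  have hAσ : ∀ j x, A x (σ' j x) := by
    intro j x
    have := hmem' j x
    rw [hmem_Out] at this
    obtain ⟨i, hi⟩ := this
    rw [← hi]
    exact hAo x i
  refine ⟨fun j => Equiv.ofBijective (σ' j) (hbij' j), fun i x => hAσ i x, ?_, hinj', ?_⟩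
  · intro i j x h
    set y := (Equiv.ofBijective (σ' j) (hbij' j))⁻¹ x with hy
    have hjy : σ' j y = x := (Equiv.ofBijective (σ' j) (hbij' j)).apply_symm_apply x
    have h1 : σ' i x = y := h
    have hAxy : A x y := by rw [← h1]; exact hAσ i x
    have hOx : y ∈ Out x := by rw [← h1]; exact hmem' i x
    have hOy : x ∈ Out y := by rw [← hjy]; exact hmem' j y
    rw [hmem_Out] at hOx hOy
    exact hdisj x y hAxy hOx hOy
  · intro x y hA
    rcases hcover x y hA with h | h
    · left
      have : y ∈ Out x := by rw [hmem_Out]; exact h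
      rw [← hOut_eq x, Finset.mem_image] at this
      obtain ⟨j, _, hj⟩ := this
      exact ⟨j, hj⟩
    · right
      have : x ∈ Out y := by rw [hmem_Out]; exact h
      rw [← hOut_eq y, Finset.mem_image] at this
      obtain ⟨j, _, hj⟩ := this
      exact ⟨j, hj⟩

/-- `Equiv.permCongr` as a `MulEquiv`. -/
def permMulEquiv {α β : Type*} (e : α ≃ β) : Equiv.Perm α ≃* Equiv.Perm β :=
  { e.permCongr with
    map_mul' := fun p q => by
      ext b
      simp [Equiv.permCongr_apply, Equiv.Perm.mul_apply] }

/-- A connected locally finite graph has countably many vertices. -/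
theorem countable_of_connected {V : Type*} (G : SimpleGraph V) [G.LocallyFinite]
    (hconn : G.Connected) : Countable V := by
  classical
  obtain ⟨x₀⟩ := hconn.nonempty
  set Sf : ℕ → Finset V :=
    fun n => Nat.rec {x₀} (fun _ s => s ∪ s.biUnion (fun y => G.neighborFinset y)) n with hSf
  have hSfsucc : ∀ n, Sf (n + 1) = Sf n ∪ (Sf n).biUnion (fun y => G.neighborFinset y) :=
    fun n => rfl
  have key : ∀ (u v : V) (w : G.Walk u v) (n : ℕ), u ∈ Sf n → v ∈ Sf (n + w.length) := by
    intro u v w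
    induction w with
    | nil => intro n hu; simpa using hu
    | @cons a b c h p ih =>
      intro n hu
      have hb : b ∈ Sf (n + 1) := by
        rw [hSfsucc]
        exact Finset.mem_union_right _
          (Finset.mem_biUnion.2 ⟨a, hu, (SimpleGraph.mem_neighborFinset G a b).2 h⟩)
      have h2 := ih (n + 1) hb
      have h3 : n + (SimpleGraph.Walk.cons h p).length = n + 1 + p.length := by
        rw [SimpleGraph.Walk.length_cons]; omega
      rw [h3]
      exact h2
  have huniv : (Set.univ : Set V) ⊆ ⋃ n, (Sf n : Set V) := by
    intro v _
    obtain ⟨w⟩ := hconn x₀ v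
    have h0 : x₀ ∈ Sf 0 := by simp [hSf]
    have := key x₀ v w 0 h0
    exact Set.mem_iUnion.2 ⟨0 + w.length, this⟩
  have hcount : (Set.univ : Set V).Countable :=
    Set.Countable.mono huniv (Set.countable_iUnion fun n => (Sf n).countable_toSet)
  exact Set.countable_univ_iff.1 hcount


/-- A Schreier structure on a simple graph `G` with vertex set `V`: a group `Γ` acting
transitively on `V` (the action being given by the homomorphism `act : Γ →* Equiv.Perm V`),
together with a finite symmetric subset `S ⊆ Γ` with `1 ∉ S`, such that for every vertex `x`
the map `s ↦ s • x` is a bijection from `S` onto the neighborhood of `x` in `G`. -/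
structure SchreierStructure {V : Type*} (G : SimpleGraph V) where
  Γ : Type*
  [grp : Group Γ]
  act : Γ →* Equiv.Perm V
  S : Finset Γ
  symm : ∀ s ∈ S, s⁻¹ ∈ S
  one_not_mem : (1 : Γ) ∉ S
  transitive : ∀ x y : V, ∃ g : Γ, act g x = y
  bijOn : ∀ x : V, Set.BijOn (fun s : Γ => act s x) (S : Set Γ) (G.neighborSet x)

/-- Build a Schreier structure (in any universe) from a suitable finset of permutations,
given that the vertex type is countable. -/
theorem buildSchreier {V : Type*} (G : SimpleGraph V) [Countable V]
    (S : Finset (Equiv.Perm V))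
    (h1 : ∀ s ∈ S, s⁻¹ ∈ S) (h2 : (1 : Equiv.Perm V) ∉ S)
    (h4 : ∀ x : V, Set.BijOn (fun s : Equiv.Perm V => s x) (S : Set (Equiv.Perm V))
      (G.neighborSet x)) :
    Nonempty (SchreierStructure G) := by
  classical
  obtain ⟨f, hf⟩ := exists_injective_nat V
  set e : V ≃ Set.range f := Equiv.ofInjective f hf with he
  set Ψ : ULift.{_} (Equiv.Perm (Set.range f)) ≃* Equiv.Perm V :=
    MulEquiv.ulift.trans (permMulEquiv e).symm with hΨ
  have hcoe : ∀ z, Ψ.toEquiv z = Ψ z := fun _ => rfl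
  refine ⟨{
    Γ := ULift (Equiv.Perm (Set.range f))
    act := Ψ.toMonoidHom
    S := S.map Ψ.toEquiv.symm.toEmbedding
    symm := ?_
    one_not_mem := ?_
    transitive := ?_
    bijOn := ?_ }⟩
  · intro s hs
    rw [Finset.mem_map_equiv] at hs ⊢
    simp only [Equiv.symm_symm] at hs ⊢
    rw [hcoe] at hs ⊢
    rw [map_inv]
    exact h1 _ hs
  · intro h
    rw [Finset.mem_map_equiv] at h
    simp only [Equiv.symm_symm] at h
    rw [hcoe, map_one] at h
    exact h2 h
  · intro x y
    refine ⟨Ψ.symm (Equiv.swap x y), ?_⟩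
    simp only [MulEquiv.coe_toMonoidHom, MulEquiv.apply_symm_apply]
    exact Equiv.swap_apply_left x y
  · intro x
    have hbijΨ : Set.BijOn (fun t => Ψ t) ((S.map Ψ.toEquiv.symm.toEmbedding : Finset _) : Set _)
        (S : Set (Equiv.Perm V)) := by
      refine ⟨?_, ?_, ?_⟩
      · intro t ht
        rw [Finset.mem_coe, Finset.mem_map_equiv] at ht
        simp only [Equiv.symm_symm] at ht
        rw [hcoe] at ht
        exact ht
      · intro a _ b _ hab
        exact Ψ.injective hab
      · intro s hs
        refine ⟨Ψ.symm s, ?_, Ψ.apply_symm_apply s⟩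
        rw [Finset.mem_coe, Finset.mem_map_equiv]
        simp only [Equiv.symm_symm]
        rw [hcoe, MulEquiv.apply_symm_apply]
        exact hs
    exact (h4 x).comp hbijΨ

/-- A connected locally finite `(2d+1)`-regular simple graph has a perfect
matching if and only if it admits a Schreier structure (i.e. iff it is isomorphic to a
Schreier graph). -/
theorem odd_regular_matchable_iff_schreier {V : Type*} (G : SimpleGraph V)
    [G.LocallyFinite] (d : ℕ) (hconn : G.Connected)
    (hreg : G.IsRegularOfDegree (2 * d + 1)) :
    (∃ M : G.Subgraph, M.IsPerfectMatching) ↔ Nonempty (SchreierStructure G) := by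
  classical
  obtain ⟨x₀⟩ := hconn.nonempty
  constructor
  · rintro ⟨M, hM⟩
    have hm : ∀ x : V, ∃! y, M.Adj x y := fun x => hM.1 (hM.2 x)
    set m : V → V := fun x => (hm x).choose with hmdef
    have hmAdj : ∀ x, M.Adj x (m x) := fun x => (hm x).choose_spec.1
    have hmUniq : ∀ x y, M.Adj x y → y = m x := fun x y h => (hm x).choose_spec.2 y h
    have hmInvol : Function.Involutive m := fun x =>
      (hmUniq (m x) x (hmAdj x).symm).symm
    have hmG : ∀ x, G.Adj x (m x) := fun x => (hmAdj x).adj_sub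
    have hmne : ∀ x, m x ≠ x := fun x => (hmG x).ne'
    set A : V → V → Prop := fun x y => G.Adj x y ∧ y ≠ m x with hAdef
    have hAsymm : ∀ x y, A x y → A y x := by
      rintro x y ⟨h1, h2⟩
      refine ⟨h1.symm, fun hx => h2 ?_⟩
      have hMyx : M.Adj y x := hx ▸ hmAdj y
      exact hmUniq x y hMyx.symm
    have hAirr : ∀ x, ¬ A x x := fun x h => G.loopless.irrefl x h.1
    set NB : V → Finset V := fun x => (G.neighborFinset x).erase (m x) with hNBdef
    have hNB : ∀ x y, y ∈ NB x ↔ A x y := by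
      intro x y
      rw [hNBdef]
      simp only [Finset.mem_erase, SimpleGraph.mem_neighborFinset, hAdef]
      tauto
    have hNBcard : ∀ x, (NB x).card = 2 * d := by
      intro x
      rw [hNBdef]
      rw [Finset.card_erase_of_mem ((SimpleGraph.mem_neighborFinset G x (m x)).2 (hmG x))]
      have := hreg x
      rw [SimpleGraph.degree] at this
      omega
    obtain ⟨σ, h1, h2, h3, h4⟩ := orient_and_split d A hAsymm hAirr NB hNB hNBcard
    have hInvA : ∀ (i : Fin d) (x : V), A x ((σ i)⁻¹ x) := by
      intro i x
      have := h1 i ((σ i)⁻¹ x)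
      rw [show ∀ (f : Equiv.Perm V) (y : V), f (f⁻¹ y) = y from fun f y => f.apply_symm_apply y] at this
      exact hAsymm _ _ this
    set mP : Equiv.Perm V := hmInvol.toPerm m with hmPdef
    have hmP : ∀ x, mP x = m x := fun x => rfl
    have hmPsq : mP * mP = 1 := Equiv.ext fun x => hmInvol x
    have hmPinv : mP⁻¹ = mP := inv_eq_of_mul_eq_one_right hmPsq
    set S : Finset (Equiv.Perm V) :=
      insert mP ((Finset.image σ Finset.univ) ∪
        (Finset.image (fun i => (σ i)⁻¹) Finset.univ)) with hSdef
    have hSmem : ∀ s, s ∈ S ↔ s = mP ∨ (∃ i, σ i = s) ∨ (∃ i, (σ i)⁻¹ = s) := by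
      intro s
      rw [hSdef]
      simp [Finset.mem_insert, Finset.mem_union, Finset.mem_image]
    haveI : Countable V := countable_of_connected G hconn
    refine buildSchreier G S ?_ ?_ ?_
    · -- symm
      intro s hs
      rw [hSmem] at hs ⊢
      rcases hs with rfl | ⟨i, rfl⟩ | ⟨i, hi⟩
      · exact Or.inl hmPinv
      · exact Or.inr (Or.inr ⟨i, rfl⟩)
      · exact Or.inr (Or.inl ⟨i, by rw [← hi, inv_inv]⟩)
    · -- one_not_mem
      intro h
      rw [hSmem] at h
      rcases h with h | ⟨i, hi⟩ | ⟨i, hi⟩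
      · have := hmne x₀
        rw [← hmP x₀, ← h] at this
        exact this rfl
      · have := (h1 i x₀).1.ne
        rw [hi] at this
        exact this rfl
      · rw [inv_eq_one] at hi
        have := (h1 i x₀).1.ne
        rw [hi] at this
        exact this rfl
    · -- bijOn
      intro x
      refine ⟨?_, ?_, ?_⟩
      · -- mapsTo
        intro s hs
        rw [Finset.mem_coe, hSmem] at hs
        rcases hs with rfl | ⟨i, rfl⟩ | ⟨i, rfl⟩
        · exact hmG x
        · exact (h1 i x).1
        · exact (hInvA i x).1
      · -- injOn
        intro s hs t ht heq
        rw [Finset.mem_coe, hSmem] at hs ht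
        simp only at heq
        rcases hs with rfl | ⟨i, rfl⟩ | ⟨i, rfl⟩ <;>
          rcases ht with rfl | ⟨j, rfl⟩ | ⟨j, rfl⟩
        · rfl
        · exact absurd (hmP x ▸ heq.symm) (h1 j x).2
        · exact absurd (hmP x ▸ heq.symm) (hInvA j x).2
        · exact absurd (hmP x ▸ heq) (h1 i x).2
        · exact congrArg σ (h3 x heq)
        · exact absurd heq (h2 i j x)
        · exact absurd (hmP x ▸ heq) (hInvA i x).2
        · exact absurd heq.symm (h2 j i x)
        · have : σ i ((σ i)⁻¹ x) = σ j ((σ i)⁻¹ x) := by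
            rw [show ∀ (f : Equiv.Perm V) (y : V), f (f⁻¹ y) = y from fun f y => f.apply_symm_apply y, heq, show ∀ (f : Equiv.Perm V) (y : V), f (f⁻¹ y) = y from fun f y => f.apply_symm_apply y]
          exact congrArg (fun p => p⁻¹) (congrArg σ (h3 _ this))
      · -- surjOn
        intro y hy
        rw [SimpleGraph.mem_neighborSet] at hy
        by_cases hmy : y = m x
        · refine ⟨mP, ?_, ?_⟩
          · rw [Finset.mem_coe, hSmem]; exact Or.inl rfl
          · simp only [hmP, hmy]
        · rcases h4 x y ⟨hy, hmy⟩ with ⟨i, hi⟩ | ⟨i, hi⟩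
          · refine ⟨σ i, ?_, hi⟩
            rw [Finset.mem_coe, hSmem]; exact Or.inr (Or.inl ⟨i, rfl⟩)
          · refine ⟨(σ i)⁻¹, ?_, ?_⟩
            · rw [Finset.mem_coe, hSmem]; exact Or.inr (Or.inr ⟨i, rfl⟩)
            · simp only
              rw [← hi, show ∀ (f : Equiv.Perm V) (y : V), f⁻¹ (f y) = y from fun f y => f.symm_apply_apply y]
  · rintro ⟨SS⟩
    letI := SS.grp
    have hbij := SS.bijOn x₀
    have himg : Finset.image (fun s => SS.act s x₀) SS.S = G.neighborFinset x₀ := by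
      ext y
      simp only [Finset.mem_image, SimpleGraph.mem_neighborFinset]
      constructor
      · rintro ⟨s, hs, rfl⟩
        exact hbij.mapsTo (Finset.mem_coe.2 hs)
      · intro hy
        obtain ⟨s, hs, hs2⟩ := hbij.surjOn ((SimpleGraph.mem_neighborSet G x₀ y).2 hy)
        exact ⟨s, Finset.mem_coe.1 hs, hs2⟩
    have hcardS : SS.S.card = 2 * d + 1 := by
      rw [← Finset.card_image_of_injOn hbij.injOn, himg]
      exact hreg x₀
    obtain ⟨s₀, hs₀, hfix⟩ := exists_fixed_of_odd SS.S (fun s => s⁻¹) SS.symm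
      (fun s _ => inv_inv s) ⟨d, by omega⟩
    have hsq : s₀ * s₀ = 1 := by
      have h := inv_mul_cancel s₀
      rwa [hfix] at h
    have hinvol : ∀ x, SS.act s₀ (SS.act s₀ x) = x := by
      intro x
      rw [← Equiv.Perm.mul_apply, ← map_mul, hsq, map_one]
      rfl
    have hadj : ∀ x, G.Adj x (SS.act s₀ x) := fun x =>
      (SS.bijOn x).mapsTo (Finset.mem_coe.2 hs₀)
    refine ⟨⟨Set.univ, fun x y => SS.act s₀ x = y, ?_, ?_, ?_⟩, ?_, fun v => Set.mem_univ v⟩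
    · intro v w h
      exact h ▸ hadj v
    · intro v w _
      exact Set.mem_univ v
    · refine ⟨fun v w h => ?_⟩
      rw [← h]
      exact hinvol v
    · intro v _
      exact ⟨SS.act s₀ v, rfl, fun y hy => (Eq.symm hy : _)⟩
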